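/- The number of TL-states of length h with f empty slots equals the Stirling number of the second kind S(h+1, f+1). Here a TL-state is an h-tuple ν̂ in {0,1,...,h}^h (with 0 denoting 'empty') such that for each t, either ν̂_t = 0 or ν̂_t ≥ t, and for distinct j,k with ν̂_j, ν̂_k nonzero, ν̂_j − j ≠ ν̂_k − k; it has f empty slots if exactly f coordinates equal 0. -/

import Mathlib

open Finset
open scoped Classical

/-- Stirling numbers of the second kind. -/
def stirling : ℕ → ℕ → ℕ
  | 0, 0 => 1
  | 0, _ + 1 => 0
  | _ + 1, 0 => 0
  | n + 1, k + 1 => (k + 1) * stirling n (k + 1) + stirling n k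

/-- Bell numbers. -/
def bellNum (n : ℕ) : ℕ := ∑ k ∈ Finset.range (n + 1), stirling n k

/-- A TL-state of length `h`: `ν t = 0` means no ball lands at (1-based) time `t+1`;
otherwise `ν t` is the airtime of the ball landing at time `t+1`, which must be `≥ t+1`,
and no two balls were thrown at the same instant. -/
def IsTL (h : ℕ) (ν : Fin h → Fin (h + 1)) : Prop :=
  (∀ t : Fin h, (ν t : ℕ) = 0 ∨ t.val + 1 ≤ (ν t : ℕ)) ∧
  ∀ j k : Fin h, j ≠ k → (ν j : ℕ) ≠ 0 → (ν k : ℕ) ≠ 0 →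
    (ν j : ℕ) + k.val ≠ (ν k : ℕ) + j.val

/-- Number of empty slots of a TL-state. -/
def tlZeros {h : ℕ} (ν : Fin h → Fin (h + 1)) : ℕ :=
  (Finset.univ.filter (fun t : Fin h => (ν t : ℕ) = 0)).card

/-- Number of zeros of a landing state. -/
def numZeros {h : ℕ} (ν : Fin h → Bool) : ℕ :=
  (Finset.univ.filter (fun t : Fin h => ν t = false)).card

/-- `φ_t(ν)` (with `t : Fin h` representing 1-based time `t+1`). -/
def phi {h : ℕ} (ν : Fin h → Bool) (t : Fin h) : ℕ :=
  if ν t = true then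
    (Finset.univ.filter (fun j : Fin h => t < j ∧ ν j = false)).card
  else 0

/-- The weight `Δ(ν)`. -/
def Delta {h : ℕ} (ν : Fin h → Bool) : ℕ := ∏ t : Fin h, (1 + phi ν t)

/-- 1-based access to a landing state, `false` out of range (convention `ν_t = 0` for `t > h`). -/
def getB {h : ℕ} (ν : Fin h → Bool) (j : ℕ) : Bool :=
  if hj : 1 ≤ j ∧ j ≤ h then ν ⟨j - 1, by omega⟩ else false

/-- Throwing operator on landing states: `theta 0` is the left shift (wait), and for
`1 ≤ j`, `theta j` shifts left and places a ball at 1-based position `j`. -/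
def theta {h : ℕ} (j : ℕ) (ν : Fin h → Bool) : Fin h → Bool :=
  fun t => if t.val + 1 = j then true else getB ν (t.val + 2)

/-- 1-based access to a TL-state given as a ℕ-valued tuple, `0` out of range. -/
def getN {h : ℕ} (ν : Fin h → ℕ) (j : ℕ) : ℕ :=
  if hj : 1 ≤ j ∧ j ≤ h then ν ⟨j - 1, by omega⟩ else 0

/-- Throwing operator on ℕ-valued TL-states. -/
def thetaN {h : ℕ} (j : ℕ) (ν : Fin h → ℕ) : Fin h → ℕ :=
  fun t => if t.val + 1 = j then j else getN ν (t.val + 2)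

/-- Transition probabilities for the standard juggling chain on landing states. -/
noncomputable def pStd (h f : ℕ) (ν ω : Fin h → Bool) : ℝ :=
  if getB ν 1 = false then (if ω = theta 0 ν then 1 else 0)
  else if ∃ j, 1 ≤ j ∧ j ≤ h ∧ getB ν (j + 1) = false ∧ ω = theta j ν then
    1 / ((f : ℝ) + 1)
  else 0

/-- The set of landing states with exactly `f` zeros. -/
noncomputable def States (h f : ℕ) : Finset (Fin h → Bool) :=
  Finset.univ.filter (fun ν => numZeros ν = f)

/-- The set of TL-states with exactly `f` empty slots. -/
noncomputable def TLStates (h f : ℕ) : Finset (Fin h → Fin (h + 1)) :=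
  Finset.univ.filter (fun ν => IsTL h ν ∧ tlZeros ν = f)

/-- Projection from TL-states to landing states. -/
def proj {h : ℕ} (ν : Fin h → Fin (h + 1)) : Fin h → Bool :=
  fun t => decide ((ν t : ℕ) ≠ 0)

/-- Transition probabilities for the TL-state chain. -/
noncomputable def pHat (h f : ℕ) (μ ν : Fin h → Fin (h + 1)) : ℝ :=
  if getN (h := h) (fun s => (μ s : ℕ)) 1 = 0 then
    (if (fun s => (ν s : ℕ)) = thetaN 0 (fun s => (μ s : ℕ)) then 1 else 0)
  else if ∃ j, 1 ≤ j ∧ j ≤ h ∧ getN (h := h) (fun s => (μ s : ℕ)) (j + 1) = 0 ∧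
      (fun s => (ν s : ℕ)) = thetaN j (fun s => (μ s : ℕ)) then
    1 / ((f : ℝ) + 1)
  else 0

namespace TLAux

/-- lift: 0 ↦ 0, x ↦ x+1. -/
def lift {h : ℕ} (x : Fin (h + 1)) : Fin (h + 2) :=
  if (x : ℕ) = 0 then 0 else x.succ

lemma lift_val {h : ℕ} (x : Fin (h + 1)) :
    (lift x : ℕ) = if (x : ℕ) = 0 then 0 else (x : ℕ) + 1 := by
  unfold lift; split <;> simp

/-- Drop the first slot of a TL-state of length h+1. -/
def shiftTL {h : ℕ} (ν : Fin (h + 1) → Fin (h + 2)) : Fin h → Fin (h + 1) :=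
  fun s => ⟨(ν s.succ : ℕ) - 1, by have := (ν s.succ).isLt; omega⟩

/-- Prepend a value to a TL-state of length h. -/
def extTL {h : ℕ} (c : Fin (h + 2)) (ν' : Fin h → Fin (h + 1)) :
    Fin (h + 1) → Fin (h + 2) :=
  Fin.cases c (fun s => lift (ν' s))

lemma shift_val {h : ℕ} (ν : Fin (h + 1) → Fin (h + 2)) (s : Fin h) :
    (shiftTL ν s : ℕ) = (ν s.succ : ℕ) - 1 := rfl

lemma ext_zero {h : ℕ} (c : Fin (h + 2)) (ν' : Fin h → Fin (h + 1)) :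
    extTL c ν' 0 = c := rfl

lemma ext_succ {h : ℕ} (c : Fin (h + 2)) (ν' : Fin h → Fin (h + 1)) (s : Fin h) :
    extTL c ν' s.succ = lift (ν' s) := by
  simp [extTL]

lemma shift_ext {h : ℕ} (c : Fin (h + 2)) (ν' : Fin h → Fin (h + 1)) :
    shiftTL (extTL c ν') = ν' := by
  funext s
  apply Fin.ext
  rw [shift_val, ext_succ, lift_val]
  split <;> omega

lemma ext_shift {h : ℕ} (ν : Fin (h + 1) → Fin (h + 2)) (hTL : IsTL (h + 1) ν) :
    extTL (ν 0) (shiftTL ν) = ν := by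
  funext t
  induction t using Fin.cases with
  | zero => rfl
  | succ s =>
    apply Fin.ext
    rw [ext_succ, lift_val, shift_val]
    have hv : (ν s.succ : ℕ) = 0 ∨ s.val + 2 ≤ (ν s.succ : ℕ) := by
      have hh := hTL.1 s.succ; rw [Fin.val_succ] at hh; omega
    split <;> omega

lemma tlZeros_ext {h : ℕ} (c : Fin (h + 2)) (ν' : Fin h → Fin (h + 1)) :
    tlZeros (extTL c ν') = (if (c : ℕ) = 0 then 1 else 0) + tlZeros ν' := by
  unfold tlZeros
  rw [Finset.card_filter, Finset.card_filter, Fin.sum_univ_succ]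
  have h0 : (extTL c ν' 0 : ℕ) = (c : ℕ) := rfl
  have hsum : (∑ s : Fin h, if (extTL c ν' s.succ : ℕ) = 0 then 1 else 0)
      = ∑ s : Fin h, if (ν' s : ℕ) = 0 then 1 else 0 := by
    apply Finset.sum_congr rfl
    intro s _
    rw [ext_succ, lift_val]
    by_cases hs : (ν' s : ℕ) = 0 <;> simp [hs]
  rw [h0, hsum]

lemma tlZeros_shift {h : ℕ} (ν : Fin (h + 1) → Fin (h + 2)) (hTL : IsTL (h + 1) ν) :
    tlZeros ν = (if (ν 0 : ℕ) = 0 then 1 else 0) + tlZeros (shiftTL ν) := by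
  conv_lhs => rw [← ext_shift ν hTL]
  rw [tlZeros_ext]

lemma isTL_shift {h : ℕ} (ν : Fin (h + 1) → Fin (h + 2)) (hTL : IsTL (h + 1) ν) :
    IsTL h (shiftTL ν) := by
  constructor
  · intro t
    have hv : (ν t.succ : ℕ) = 0 ∨ t.val + 2 ≤ (ν t.succ : ℕ) := by
      have hh := hTL.1 t.succ; rw [Fin.val_succ] at hh; omega
    rw [shift_val]
    omega
  · intro j k hjk hj hk
    have hjk' : j.succ ≠ k.succ := by simpa using hjk
    rw [shift_val] at hj hk ⊢
    rw [shift_val]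
    have hj' : (ν j.succ : ℕ) ≠ 0 := by omega
    have hk' : (ν k.succ : ℕ) ≠ 0 := by omega
    have := hTL.2 j.succ k.succ hjk' hj' hk'
    simp only [Fin.val_succ] at this
    omega

lemma isTL_ext {h : ℕ} (c : Fin (h + 2)) (ν' : Fin h → Fin (h + 1)) (hTL : IsTL h ν')
    (hc : ∀ s : Fin h, (ν' s : ℕ) ≠ 0 → (c : ℕ) + s.val ≠ (ν' s : ℕ)) :
    IsTL (h + 1) (extTL c ν') := by
  have hval : ∀ s : Fin h, (extTL c ν' s.succ : ℕ) =
      if (ν' s : ℕ) = 0 then 0 else (ν' s : ℕ) + 1 := by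
    intro s; rw [ext_succ, lift_val]
  constructor
  · intro t
    induction t using Fin.cases with
    | zero =>
      have : (extTL c ν' 0 : ℕ) = (c : ℕ) := rfl
      rw [this]
      simp only [Fin.val_zero]
      omega
    | succ s =>
      rw [hval s]
      have := hTL.1 s
      by_cases hs : (ν' s : ℕ) = 0 <;> simp [hs, Fin.val_succ] <;> omega
  · intro j k hjk hj hk
    induction j using Fin.cases with
    | zero =>
      induction k using Fin.cases with
      | zero => exact absurd rfl hjk
      | succ s =>
        have hc0 : (extTL c ν' 0 : ℕ) = (c : ℕ) := rfl
        rw [hc0] at hj ⊢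
        rw [hval s] at hk ⊢
        by_cases hs : (ν' s : ℕ) = 0
        · simp [hs] at hk
        · simp only [hs, if_neg, ite_false]
          have := hc s hs
          simp [Fin.val_succ]
          omega
    | succ s =>
      induction k using Fin.cases with
      | zero =>
        have hc0 : (extTL c ν' 0 : ℕ) = (c : ℕ) := rfl
        rw [hc0] at hk ⊢
        rw [hval s] at hj ⊢
        by_cases hs : (ν' s : ℕ) = 0
        · simp [hs] at hj
        · simp only [hs, ite_false]
          have := hc s hs
          simp [Fin.val_succ]
          omega
      | succ u =>
        rw [hval s] at hj ⊢
        rw [hval u] at hk ⊢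
        have hsu : s ≠ u := by
          intro hh; exact hjk (by rw [hh])
        by_cases hs : (ν' s : ℕ) = 0
        · simp [hs] at hj
        · by_cases hu : (ν' u : ℕ) = 0
          · simp [hu] at hk
          · have := hTL.2 s u hsu hs hu
            simp only [hs, hu, ite_false, Fin.val_succ]
            omega

lemma mem_TLStates {h f : ℕ} (ν : Fin h → Fin (h + 1)) :
    ν ∈ TLStates h f ↔ IsTL h ν ∧ tlZeros ν = f := by
  simp [TLStates]

lemma f_le_h {h f : ℕ} (ν' : Fin h → Fin (h + 1)) (hz : tlZeros ν' = f) : f ≤ h := by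
  have := Finset.card_filter_le (Finset.univ : Finset (Fin h))
      (fun t : Fin h => (ν' t : ℕ) = 0)
  unfold tlZeros at hz
  rw [← hz]; simpa using this

lemma card_nonzero {h f : ℕ} (ν' : Fin h → Fin (h + 1)) (hz : tlZeros ν' = f) :
    (Finset.univ.filter (fun s : Fin h => (ν' s : ℕ) ≠ 0)).card = h - f := by
  have h1 := Finset.card_filter_add_card_filter_not
      (s := (Finset.univ : Finset (Fin h))) (p := fun s : Fin h => (ν' s : ℕ) = 0)
  unfold tlZeros at hz
  simp only [Finset.card_univ, Fintype.card_fin] at h1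
  rw [hz] at h1
  simp only [ne_eq]
  omega

/-- The set of admissible first values for extending `ν'`. -/
noncomputable def allowed {h : ℕ} (ν' : Fin h → Fin (h + 1)) : Finset (Fin (h + 2)) :=
  Finset.univ.filter (fun c : Fin (h + 2) =>
    1 ≤ (c : ℕ) ∧ ∀ s : Fin h, (ν' s : ℕ) ≠ 0 → (c : ℕ) + s.val ≠ (ν' s : ℕ))

lemma card_allowed {h f : ℕ} (ν' : Fin h → Fin (h + 1)) (hTL : IsTL h ν')
    (hz : tlZeros ν' = f) : (allowed ν').card = f + 1 := by
  classical
  set D : Finset (Fin (h + 2)) :=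
    insert 0 ((Finset.univ.filter (fun s : Fin h => (ν' s : ℕ) ≠ 0)).image
      (fun s : Fin h => (⟨(ν' s : ℕ) - s.val, by have := (ν' s).isLt; omega⟩ : Fin (h + 2))))
    with hD
  have hAD : allowed ν' = Finset.univ \ D := by
    ext c
    simp only [allowed, Finset.mem_filter, Finset.mem_univ, true_and, Finset.mem_sdiff,
      hD, Finset.mem_insert, Finset.mem_image, not_or, not_exists, not_and]
    constructor
    · rintro ⟨h1, h2⟩
      refine ⟨?_, ?_⟩
      · intro hc0; rw [hc0] at h1; simp at h1
      · intro s hs hcs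
        have hge : s.val + 1 ≤ (ν' s : ℕ) := by
          rcases hTL.1 s with hh | hh
          · exact absurd hh hs
          · exact hh
        have hv : (ν' s : ℕ) - s.val = (c : ℕ) := by
          have := congrArg Fin.val hcs; simpa using this
        exact h2 s hs (by omega)
    · rintro ⟨h0, h2⟩
      constructor
      · have : (c : ℕ) ≠ 0 := by
          intro hc; exact h0 (by apply Fin.ext; simpa using hc)
        omega
      · intro s hs hcs
        have hge : s.val + 1 ≤ (ν' s : ℕ) := by
          rcases hTL.1 s with hh | hh
          · exact absurd hh hs
          · exact hh
        refine h2 s hs ?_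
        apply Fin.ext
        show (ν' s : ℕ) - s.val = (c : ℕ)
        omega
  rw [hAD, Finset.card_sdiff_of_subset (Finset.subset_univ D)]
  have hcardD : D.card = 1 + (h - f) := by
    rw [hD]
    rw [Finset.card_insert_of_notMem, Finset.card_image_of_injOn]
    · rw [card_nonzero ν' hz]
      omega
    · intro j hj k hk hjk
      simp only [Finset.mem_coe, Finset.mem_filter, Finset.mem_univ, true_and] at hj hk
      have hgej : j.val + 1 ≤ (ν' j : ℕ) := by
        rcases hTL.1 j with hh | hh
        · exact absurd hh hj
        · exact hh
      have hgek : k.val + 1 ≤ (ν' k : ℕ) := by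
        rcases hTL.1 k with hh | hh
        · exact absurd hh hk
        · exact hh
      have := congrArg Fin.val hjk
      simp only [] at this
      by_contra hne
      exact hTL.2 j k hne hj hk (by omega)
    · intro hmem
      simp only [Finset.mem_image, Finset.mem_filter, Finset.mem_univ, true_and] at hmem
      obtain ⟨s, hs, heq⟩ := hmem
      have hge : s.val + 1 ≤ (ν' s : ℕ) := by
        rcases hTL.1 s with hh | hh
        · exact absurd hh hs
        · exact hh
      have := congrArg Fin.val heq
      simp only [Fin.val_zero] at this
      omega
  have hf : f ≤ h := f_le_h ν' hz
  rw [hcardD]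
  simp only [Finset.card_univ, Fintype.card_fin]
  omega

lemma fiber_card {h f : ℕ} (ν' : Fin h → Fin (h + 1)) (hν' : ν' ∈ TLStates h f) :
    (((TLStates (h + 1) f).filter (fun ν => (ν 0 : ℕ) ≠ 0)).filter
      (fun ν => shiftTL ν = ν')).card = f + 1 := by
  rw [mem_TLStates] at hν'
  obtain ⟨hTL', hz'⟩ := hν'
  rw [← card_allowed ν' hTL' hz']
  apply Finset.card_bij (fun ν _ => ν 0)
  · intro ν hν
    simp only [Finset.mem_filter] at hν
    obtain ⟨⟨hνTL, hν0⟩, hshift⟩ := hν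
    rw [mem_TLStates] at hνTL
    obtain ⟨hTL, _⟩ := hνTL
    simp only [allowed, Finset.mem_filter, Finset.mem_univ, true_and]
    constructor
    · rcases hTL.1 0 with hh | hh
      · exact absurd hh hν0
      · simpa using hh
    · intro s hs
      have hshs : (ν' s : ℕ) = (ν s.succ : ℕ) - 1 := by
        rw [← hshift]; rfl
      have hsucc0 : (ν s.succ : ℕ) ≠ 0 := by omega
      have hne : (0 : Fin (h + 1)) ≠ s.succ := by
        intro hh
        have := congrArg Fin.val hh
        simp [Fin.val_succ] at this
      have := hTL.2 0 s.succ hne hν0 hsucc0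
      simp only [Fin.val_succ, Fin.val_zero] at this
      have hge : s.val + 2 ≤ (ν s.succ : ℕ) := by
        rcases hTL.1 s.succ with hh | hh
        · exact absurd hh hsucc0
        · simp only [Fin.val_succ] at hh; omega
      omega
  · intro ν1 h1 ν2 h2 heq
    simp only [Finset.mem_filter] at h1 h2
    obtain ⟨⟨h1TL, _⟩, h1s⟩ := h1
    obtain ⟨⟨h2TL, _⟩, h2s⟩ := h2
    rw [mem_TLStates] at h1TL h2TL
    rw [← ext_shift ν1 h1TL.1, ← ext_shift ν2 h2TL.1, h1s, h2s, heq]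
  · intro c hc
    simp only [allowed, Finset.mem_filter, Finset.mem_univ, true_and] at hc
    obtain ⟨hc1, hc2⟩ := hc
    refine ⟨extTL c ν', ?_, rfl⟩
    have hTLe : IsTL (h + 1) (extTL c ν') := isTL_ext c ν' hTL' hc2
    simp only [Finset.mem_filter]
    refine ⟨⟨?_, ?_⟩, shift_ext c ν'⟩
    · rw [mem_TLStates]
      refine ⟨hTLe, ?_⟩
      rw [tlZeros_ext]
      have : ¬ ((c : ℕ) = 0) := by omega
      rw [if_neg this, hz']
      omega
    · show (extTL c ν' 0 : ℕ) ≠ 0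
      rw [ext_zero]; omega

lemma nonzeroPart (h f : ℕ) :
    ((TLStates (h + 1) f).filter (fun ν => (ν 0 : ℕ) ≠ 0)).card
      = (f + 1) * (TLStates h f).card := by
  rw [Finset.card_eq_sum_card_fiberwise
    (f := fun ν => shiftTL ν) (t := TLStates h f) ?_]
  · rw [Finset.sum_congr rfl (fun ν' hν' => fiber_card ν' hν')]
    rw [Finset.sum_const, smul_eq_mul, Nat.mul_comm]
  · intro ν hν
    simp only [Finset.mem_coe, Finset.mem_filter] at hν
    obtain ⟨hνTL, hν0⟩ := hν
    rw [mem_TLStates] at hνTL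
    obtain ⟨hTL, hz⟩ := hνTL
    rw [Finset.mem_coe, mem_TLStates]
    refine ⟨isTL_shift ν hTL, ?_⟩
    show tlZeros (shiftTL ν) = f
    have := tlZeros_shift ν hTL
    rw [if_neg hν0] at this
    omega

lemma zeroPartZero (h : ℕ) :
    ((TLStates (h + 1) 0).filter (fun ν => (ν 0 : ℕ) = 0)).card = 0 := by
  rw [Finset.card_eq_zero]
  rw [Finset.eq_empty_iff_forall_notMem]
  intro ν hν
  simp only [Finset.mem_filter] at hν
  obtain ⟨hνTL, hν0⟩ := hν
  rw [mem_TLStates] at hνTL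
  obtain ⟨_, hz⟩ := hνTL
  unfold tlZeros at hz
  rw [Finset.card_eq_zero, Finset.eq_empty_iff_forall_notMem] at hz
  exact hz 0 (by simpa using hν0)

lemma zeroPartSucc (h f : ℕ) :
    ((TLStates (h + 1) (f + 1)).filter (fun ν => (ν 0 : ℕ) = 0)).card
      = (TLStates h f).card := by
  apply Finset.card_bij (fun ν _ => shiftTL ν)
  · intro ν hν
    simp only [Finset.mem_filter] at hν
    obtain ⟨hνTL, hν0⟩ := hν
    rw [mem_TLStates] at hνTL
    obtain ⟨hTL, hz⟩ := hνTL
    rw [mem_TLStates]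
    refine ⟨isTL_shift ν hTL, ?_⟩
    have := tlZeros_shift ν hTL
    rw [if_pos hν0] at this
    omega
  · intro ν1 h1 ν2 h2 heq
    simp only [Finset.mem_filter] at h1 h2
    obtain ⟨h1TL, h10⟩ := h1
    obtain ⟨h2TL, h20⟩ := h2
    rw [mem_TLStates] at h1TL h2TL
    have e1 : ν1 0 = ν2 0 := by
      apply Fin.ext; rw [h10, h20]
    rw [← ext_shift ν1 h1TL.1, ← ext_shift ν2 h2TL.1, heq, e1]
  · intro ν' hν'
    rw [mem_TLStates] at hν'
    obtain ⟨hTL', hz'⟩ := hν'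
    refine ⟨extTL 0 ν', ?_, shift_ext 0 ν'⟩
    have hc : ∀ s : Fin h, (ν' s : ℕ) ≠ 0 → ((0 : Fin (h + 2)) : ℕ) + s.val ≠ (ν' s : ℕ) := by
      intro s hs
      have hge : s.val + 1 ≤ (ν' s : ℕ) := by
        rcases hTL'.1 s with hh | hh
        · exact absurd hh hs
        · exact hh
      simp only [Fin.val_zero]
      omega
    simp only [Finset.mem_filter]
    refine ⟨?_, ?_⟩
    · rw [mem_TLStates]
      refine ⟨isTL_ext 0 ν' hTL' hc, ?_⟩
      rw [tlZeros_ext]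
      have h0 : ((0 : Fin (h + 2)) : ℕ) = 0 := rfl
      rw [if_pos h0, hz']
      omega
    · show (extTL 0 ν' 0 : ℕ) = 0
      rw [ext_zero]; rfl

lemma card_base (f : ℕ) : (TLStates 0 f).card = if f = 0 then 1 else 0 := by
  have hall : ∀ ν : Fin 0 → Fin 1, IsTL 0 ν ∧ tlZeros ν = 0 := by
    intro ν
    refine ⟨⟨fun t => t.elim0, fun j k _ _ _ => j.elim0⟩, ?_⟩
    unfold tlZeros
    simp
  by_cases hf : f = 0
  · subst hf
    simp only [if_pos rfl]
    have : TLStates 0 0 = Finset.univ := by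
      ext ν
      rw [mem_TLStates]
      simp only [Finset.mem_univ, iff_true]
      exact hall ν
    rw [this, Finset.card_univ]
    simp
  · rw [if_neg hf]
    rw [Finset.card_eq_zero, Finset.eq_empty_iff_forall_notMem]
    intro ν hν
    rw [mem_TLStates] at hν
    exact hf ((hall ν).2 ▸ hν.2.symm ▸ rfl)

end TLAux

/-- The number of TL-states of length `h` with `f` empty slots is `S(h+1, f+1)`. -/
theorem stmt0 (h f : ℕ) : (TLStates h f).card = stirling (h + 1) (f + 1) := by
  induction h generalizing f with
  | zero =>
    rw [TLAux.card_base]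
    cases f <;> simp [stirling]
  | succ h ih =>
    rw [← Finset.card_filter_add_card_filter_not
      (s := TLStates (h + 1) f) (p := fun ν => (ν 0 : ℕ) = 0)]
    have hstir : stirling (h + 1 + 1) (f + 1)
        = (f + 1) * stirling (h + 1) (f + 1) + stirling (h + 1) f := rfl
    rw [hstir]
    cases f with
    | zero =>
      rw [TLAux.zeroPartZero, TLAux.nonzeroPart, ih]
      simp [stirling]
    | succ f0 =>
      rw [TLAux.zeroPartSucc, TLAux.nonzeroPart, ih, ih]
      ring
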